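/- Let J be a real symmetric N×N matrix with vanishing diagonal and let Λ = {λ ∈ ℝ^N : Σ_μ λ_μ = 0}. Then there exists a unique point λ̂ ∈ Λ at which the function λ ↦ j_min(λ) (the smallest eigenvalue of J(λ) = J + diag(λ)) attains its maximum over Λ; moreover, every ground state s of the Heisenberg Hamiltonian H(s) = Tr(J s sᵀ) satisfies J(λ̂)·s_i = j_min(λ̂)·s_i for every column s_i of s, i.e., all ground states live on the eigenspace of J(λ̂) corresponding to its minimal eigenvalue. -/

import Mathlib

open Matrix

/-- A spin configuration: an `N × M` real matrix whose rows are unit vectors. -/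
def IsSpinConfig {N M : ℕ} (s : Matrix (Fin N) (Fin M) ℝ) : Prop :=
  ∀ μ, ∑ i, s μ i * s μ i = 1

/-- `s` is a ground state of the Heisenberg Hamiltonian `H(t) = Tr (J t tᵀ)`:
it is a spin configuration minimizing the energy over all spin configurations
of all dimensions. -/
def IsGroundState {N M : ℕ} (J : Matrix (Fin N) (Fin N) ℝ)
    (s : Matrix (Fin N) (Fin M) ℝ) : Prop :=
  IsSpinConfig s ∧ ∀ (M' : ℕ) (t : Matrix (Fin N) (Fin M') ℝ), IsSpinConfig t →
    (J * (t * tᵀ)).trace ≥ (J * (s * sᵀ)).trace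

/-- The smallest eigenvalue of a real square matrix (the infimum of its set of eigenvalues). -/
noncomputable def minEigenvalue {N : ℕ} (A : Matrix (Fin N) (Fin N) ℝ) : ℝ :=
  sInf {r : ℝ | ∃ x : Fin N → ℝ, x ≠ 0 ∧ A.mulVec x = r • x}

namespace SpinProofAux

variable {N : ℕ}

noncomputable def f (J : Matrix (Fin N) (Fin N) ℝ) (lam : Fin N → ℝ) : ℝ :=
  minEigenvalue (J + Matrix.diagonal lam)



variable (A : Matrix (Fin N) (Fin N) ℝ)

lemma eigset_eq (hA : A.IsHermitian) :
    {r : ℝ | ∃ x : Fin N → ℝ, x ≠ 0 ∧ A.mulVec x = r • x} = Set.range hA.eigenvalues := by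
  ext r
  constructor
  · rintro ⟨x, hx0, hx⟩
    have hdet : (A - r • (1 : Matrix (Fin N) (Fin N) ℝ)).det = 0 := by
      rw [← Matrix.exists_mulVec_eq_zero_iff]
      refine ⟨x, hx0, ?_⟩
      rw [Matrix.sub_mulVec, hx, Matrix.smul_mulVec, one_mulVec, sub_self]
    set U : Matrix (Fin N) (Fin N) ℝ := (hA.eigenvectorUnitary : Matrix (Fin N) (Fin N) ℝ) with hU
    have hUU : U * star U = 1 := (Unitary.mem_iff.mp hA.eigenvectorUnitary.2).2
    have hspec : A = U * diagonal hA.eigenvalues * star U := by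
      have := hA.spectral_theorem; simpa using this
    have key : A - r • (1 : Matrix (Fin N) (Fin N) ℝ)
        = U * diagonal (fun i => hA.eigenvalues i - r) * star U := by
      have h1 : diagonal (fun i => hA.eigenvalues i - r)
          = diagonal hA.eigenvalues - r • (1 : Matrix (Fin N) (Fin N) ℝ) := by
        ext i j
        by_cases h : i = j <;>
          simp [Matrix.diagonal_apply, h, Matrix.one_apply, Matrix.smul_apply]
      rw [h1, Matrix.mul_sub, Matrix.sub_mul, ← hspec]
      congr 1
      rw [Matrix.mul_smul, Matrix.smul_mul, mul_one, hUU]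
    rw [key] at hdet
    have : (diagonal (fun i => hA.eigenvalues i - r)).det = 0 := by
      have h2 := hdet
      rw [Matrix.det_mul, Matrix.det_mul] at h2
      have h3 : U.det * (star U).det = 1 := by rw [← Matrix.det_mul, hUU, Matrix.det_one]
      calc (diagonal (fun i => hA.eigenvalues i - r)).det
          = (diagonal (fun i => hA.eigenvalues i - r)).det * (U.det * (star U).det) := by
            rw [h3, mul_one]
        _ = U.det * (diagonal (fun i => hA.eigenvalues i - r)).det * (star U).det := by ring
        _ = 0 := h2
    rw [Matrix.det_diagonal, Finset.prod_eq_zero_iff] at this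
    obtain ⟨i, _, hi⟩ := this
    exact ⟨i, by linarith [sub_eq_zero.mp hi]⟩
  · rintro ⟨i, rfl⟩
    refine ⟨_, ?_, hA.mulVec_eigenvectorBasis i⟩
    intro h
    have hnorm : ‖hA.eigenvectorBasis i‖ = 1 := hA.eigenvectorBasis.orthonormal.1 i
    have : (hA.eigenvectorBasis i : EuclideanSpace ℝ (Fin N)) = 0 := by
      ext μ
      have := congrFun h μ
      simpa using this
    rw [this, norm_zero] at hnorm
    norm_num at hnorm

lemma exists_minEig_index (hA : A.IsHermitian) (hN : 0 < N) :
    ∃ i0 : Fin N, minEigenvalue A = hA.eigenvalues i0 ∧ ∀ i, hA.eigenvalues i0 ≤ hA.eigenvalues i := by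
  have hne : (Finset.univ : Finset (Fin N)).Nonempty := by
    simpa [Finset.univ_nonempty_iff] using Fin.pos_iff_nonempty.mp hN
  obtain ⟨i0, _, hmin⟩ := Finset.exists_min_image Finset.univ hA.eigenvalues hne
  refine ⟨i0, ?_, fun i => hmin i (Finset.mem_univ i)⟩
  rw [minEigenvalue, eigset_eq A hA]
  apply le_antisymm
  · exact csInf_le (Set.finite_range _).bddBelow ⟨i0, rfl⟩
  · exact le_csInf ⟨_, ⟨i0, rfl⟩⟩ (by rintro r ⟨i, rfl⟩; exact hmin i (Finset.mem_univ i))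

/-- quadratic form in diagonal coordinates -/
lemma quad_eq (hA : A.IsHermitian) (x : Fin N → ℝ) :
    x ⬝ᵥ A *ᵥ x
      = ∑ i, hA.eigenvalues i * (((star (hA.eigenvectorUnitary : Matrix (Fin N) (Fin N) ℝ)) *ᵥ x) i)^2 := by
  set U : Matrix (Fin N) (Fin N) ℝ := (hA.eigenvectorUnitary : Matrix (Fin N) (Fin N) ℝ) with hU
  set y : Fin N → ℝ := (star U) *ᵥ x with hy
  have hsU : star U = Uᵀ := by
    rw [Matrix.star_eq_conjTranspose, conjTranspose_eq_transpose_of_trivial]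
  have hspec : A = U * diagonal hA.eigenvalues * star U := by
    have := hA.spectral_theorem
    simpa using this
  calc x ⬝ᵥ A *ᵥ x = x ⬝ᵥ (U * diagonal hA.eigenvalues * star U) *ᵥ x := by rw [← hspec]
    _ = x ⬝ᵥ U *ᵥ (diagonal hA.eigenvalues *ᵥ y) := by
        rw [hy, mulVec_mulVec, mulVec_mulVec]
    _ = (x ᵥ* U) ⬝ᵥ (diagonal hA.eigenvalues *ᵥ y) := by rw [dotProduct_mulVec]
    _ = y ⬝ᵥ (diagonal hA.eigenvalues *ᵥ y) := by rw [hy, hsU, mulVec_transpose]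
    _ = ∑ i, hA.eigenvalues i * (y i)^2 := by
        simp [dotProduct, mulVec_diagonal]
        exact Finset.sum_congr rfl fun i _ => by ring

lemma dot_self_eq (hA : A.IsHermitian) (x : Fin N → ℝ) :
    x ⬝ᵥ x = ∑ i, (((star (hA.eigenvectorUnitary : Matrix (Fin N) (Fin N) ℝ)) *ᵥ x) i)^2 := by
  set U : Matrix (Fin N) (Fin N) ℝ := (hA.eigenvectorUnitary : Matrix (Fin N) (Fin N) ℝ) with hU
  set y : Fin N → ℝ := (star U) *ᵥ x with hy
  have hsU : star U = Uᵀ := by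
    rw [Matrix.star_eq_conjTranspose, conjTranspose_eq_transpose_of_trivial]
  have hUU : U * star U = 1 := (Unitary.mem_iff.mp hA.eigenvectorUnitary.2).2
  have : y ⬝ᵥ y = x ⬝ᵥ x := by
    calc y ⬝ᵥ y = (x ᵥ* U) ⬝ᵥ y := by rw [hy, hsU, mulVec_transpose]
      _ = x ⬝ᵥ U *ᵥ y := (dotProduct_mulVec x U y).symm
      _ = x ⬝ᵥ (U * star U) *ᵥ x := by rw [hy, mulVec_mulVec]
      _ = x ⬝ᵥ x := by rw [hUU, one_mulVec]
  rw [← this]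
  simp [dotProduct]
  exact Finset.sum_congr rfl fun i _ => by ring

/-- Rayleigh lower bound. -/
lemma rayleigh_lb (hA : A.IsHermitian) (hN : 0 < N) (x : Fin N → ℝ) :
    minEigenvalue A * (x ⬝ᵥ x) ≤ x ⬝ᵥ A *ᵥ x := by
  obtain ⟨i0, hm, hmin⟩ := exists_minEig_index A hA hN
  rw [hm, quad_eq A hA x, dot_self_eq A hA x, Finset.mul_sum]
  refine Finset.sum_le_sum fun i _ => ?_
  exact mul_le_mul_of_nonneg_right (hmin i) (sq_nonneg _)

/-- existence of a unit eigenvector for the minimal eigenvalue -/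
lemma exists_unit_minEigvec (hA : A.IsHermitian) (hN : 0 < N) :
    ∃ x : Fin N → ℝ, x ⬝ᵥ x = 1 ∧ A *ᵥ x = minEigenvalue A • x := by
  obtain ⟨i0, hm, _⟩ := exists_minEig_index A hA hN
  refine ⟨_, ?_, by rw [hm]; exact hA.mulVec_eigenvectorBasis i0⟩
  have hnorm : ‖hA.eigenvectorBasis i0‖ = 1 := hA.eigenvectorBasis.orthonormal.1 i0
  rw [EuclideanSpace.norm_eq] at hnorm
  have h2 : ∑ i, ‖(hA.eigenvectorBasis i0) i‖ ^ 2 = 1 := by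
    exact Real.sqrt_eq_one.mp hnorm
  rw [dotProduct]
  rw [← h2]
  exact Finset.sum_congr rfl fun i _ => by
    simp [Real.norm_eq_abs, sq_abs, pow_two]

/-- Rayleigh equality implies eigenvector. -/
lemma eigvec_of_rayleigh_eq (hA : A.IsHermitian) (hN : 0 < N) (x : Fin N → ℝ)
    (hx : x ⬝ᵥ A *ᵥ x = minEigenvalue A * (x ⬝ᵥ x)) :
    A *ᵥ x = minEigenvalue A • x := by
  set m := minEigenvalue A with hm
  set B : Matrix (Fin N) (Fin N) ℝ := A - m • (1 : Matrix (Fin N) (Fin N) ℝ) with hB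
  have hBH : B.IsHermitian := by
    refine IsHermitian.sub hA ?_
    rw [Matrix.IsHermitian, conjTranspose_eq_transpose_of_trivial]
    exact (Matrix.transpose_smul m 1).trans (by rw [Matrix.transpose_one])
  have hBx : ∀ y : Fin N → ℝ, y ⬝ᵥ B *ᵥ y = y ⬝ᵥ A *ᵥ y - m * (y ⬝ᵥ y) := by
    intro y
    rw [hB, Matrix.sub_mulVec, dotProduct_sub, Matrix.smul_mulVec, one_mulVec,
      dotProduct_smul, smul_eq_mul]
  have hPSD : B.PosSemidef := by
    refine Matrix.PosSemidef.of_dotProduct_mulVec_nonneg hBH fun y => ?_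
    have := rayleigh_lb A hA hN y
    have h2 := hBx y
    simp only [star_trivial]
    rw [h2]
    · linarith
  have h0 : x ⬝ᵥ B *ᵥ x = 0 := by rw [hBx x, hx]; ring
  have := (hPSD.dotProduct_mulVec_zero_iff x).mp (by simpa using h0)
  have h3 : A *ᵥ x - m • x = 0 := by
    rw [hB, Matrix.sub_mulVec, Matrix.smul_mulVec, one_mulVec] at this
    exact this
  have := sub_eq_zero.mp h3
  rw [this]




section F
variable (J : Matrix (Fin N) (Fin N) ℝ)

lemma hermA (hsym : J.IsSymm) (lam : Fin N → ℝ) : (J + Matrix.diagonal lam).IsHermitian := by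
  refine Matrix.IsHermitian.add ?_ (Matrix.isHermitian_diagonal lam)
  rw [Matrix.IsHermitian, conjTranspose_eq_transpose_of_trivial]
  exact hsym

lemma quadA (lam : Fin N → ℝ) (x : Fin N → ℝ) :
    x ⬝ᵥ (J + Matrix.diagonal lam) *ᵥ x = x ⬝ᵥ J *ᵥ x + ∑ μ, lam μ * (x μ)^2 := by
  rw [Matrix.add_mulVec, dotProduct_add]
  congr 1
  simp [dotProduct, mulVec_diagonal]
  exact Finset.sum_congr rfl fun μ _ => by ring

/-- the value of the quadratic form at a unit eigenvector is the eigenvalue -/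
lemma quad_of_eigvec (A : Matrix (Fin N) (Fin N) ℝ) (x : Fin N → ℝ) (hx1 : x ⬝ᵥ x = 1) (r : ℝ)
    (hx : A *ᵥ x = r • x) : x ⬝ᵥ A *ᵥ x = r := by
  rw [hx, dotProduct_smul, smul_eq_mul, hx1, mul_one]

lemma f_le_quad (hsym : J.IsSymm) (hN : 0 < N) (lam : Fin N → ℝ) (x : Fin N → ℝ)
    (hx1 : x ⬝ᵥ x = 1) : f J lam ≤ x ⬝ᵥ (J + Matrix.diagonal lam) *ᵥ x := by
  have := rayleigh_lb (J + Matrix.diagonal lam) (hermA J hsym lam) hN x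
  rw [hx1, mul_one] at this
  exact this

lemma single_unit (μ : Fin N) : (Pi.single μ 1 : Fin N → ℝ) ⬝ᵥ Pi.single μ 1 = 1 := by
  simp [dotProduct, Pi.single_apply]

lemma f_le_diag (hsym : J.IsSymm) (hdiag : ∀ i, J i i = 0) (hN : 0 < N) (lam : Fin N → ℝ)
    (μ : Fin N) : f J lam ≤ lam μ := by
  have h := f_le_quad J hsym hN lam (Pi.single μ 1) (single_unit μ)
  have : (Pi.single μ 1 : Fin N → ℝ) ⬝ᵥ (J + Matrix.diagonal lam) *ᵥ Pi.single μ 1 = lam μ := by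
    rw [quadA]
    have h1 : (Pi.single μ 1 : Fin N → ℝ) ⬝ᵥ J *ᵥ Pi.single μ 1 = J μ μ := by
      simp [dotProduct, mulVec, Pi.single_apply]
    rw [h1, hdiag μ]
    simp [Pi.single_apply]
  rw [this] at h
  exact h

lemma sq_le_one_of_unit (x : Fin N → ℝ) (hx1 : x ⬝ᵥ x = 1) (μ : Fin N) : (x μ)^2 ≤ 1 := by
  rw [← hx1, dotProduct]
  have : (x μ)^2 = x μ * x μ := sq (x μ)
  rw [this]
  exact Finset.single_le_sum (fun i _ => mul_self_nonneg (x i)) (Finset.mem_univ μ)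

lemma f_lipschitz (hsym : J.IsSymm) (hN : 0 < N) (lam lam' : Fin N → ℝ) :
    f J lam ≤ f J lam' + ∑ μ, |lam μ - lam' μ| := by
  obtain ⟨x, hx1, hx⟩ := exists_unit_minEigvec (J + Matrix.diagonal lam') (hermA J hsym lam') hN
  have h1 : f J lam' = x ⬝ᵥ (J + Matrix.diagonal lam') *ᵥ x :=
    (quad_of_eigvec _ x hx1 _ hx).symm
  have h2 := f_le_quad J hsym hN lam x hx1
  rw [quadA] at h1 h2
  have h3 : ∑ μ, lam μ * (x μ)^2 ≤ ∑ μ, lam' μ * (x μ)^2 + ∑ μ, |lam μ - lam' μ| := by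
    rw [← Finset.sum_add_distrib]
    refine Finset.sum_le_sum fun μ _ => ?_
    have hb := sq_le_one_of_unit x hx1 μ
    have ha : lam μ * (x μ)^2 - lam' μ * (x μ)^2 = (lam μ - lam' μ) * (x μ)^2 := by ring
    nlinarith [abs_nonneg (lam μ - lam' μ), le_abs_self (lam μ - lam' μ), neg_abs_le (lam μ - lam' μ), sq_nonneg (x μ)]
  linarith
lemma f_continuous (hsym : J.IsSymm) (hN : 0 < N) : Continuous (f J) := by
  have : LipschitzWith (⟨(N:ℝ), by positivity⟩ : NNReal) (f J) := by
    apply LipschitzWith.of_dist_le_mul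
    intro lam lam'
    rw [Real.dist_eq]
    have key : ∀ a b : Fin N → ℝ, f J a - f J b ≤ (N : ℝ) * dist a b := by
      intro a b
      have h := f_lipschitz J hsym hN a b
      have h2 : ∑ μ, |a μ - b μ| ≤ (N : ℝ) * dist a b := by
        calc ∑ μ, |a μ - b μ| ≤ ∑ _μ : Fin N, dist a b := by
              refine Finset.sum_le_sum fun μ _ => ?_
              rw [← Real.dist_eq]
              exact dist_le_pi_dist a b μ
          _ = (N : ℝ) * dist a b := by simp [Finset.sum_const, nsmul_eq_mul]
      linarith
    rw [abs_sub_le_iff]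
    constructor
    · exact key lam lam'
    · rw [dist_comm]; exact key lam' lam
  exact this.continuous

/-- coercivity bound -/
lemma f_le_neg_sum_abs (hsym : J.IsSymm) (hdiag : ∀ i, J i i = 0) (hN : 0 < N)
    (lam : Fin N → ℝ) (hsum : ∑ μ, lam μ = 0) :
    f J lam ≤ -(∑ μ, |lam μ|) / (2 * N) := by
  set T := ∑ μ, |lam μ| with hT
  have hT0 : 0 ≤ T := Finset.sum_nonneg fun μ _ => abs_nonneg _
  have key : ∑ μ, (|lam μ| - lam μ) = T := by rw [Finset.sum_sub_distrib, hsum, sub_zero]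
  -- ∃ μ with |lam μ| - lam μ ≥ T / N
  have hex : ∃ μ, T / N ≤ |lam μ| - lam μ := by
    by_contra hc
    push_neg at hc
    have : ∑ μ, (|lam μ| - lam μ) < ∑ _μ : Fin N, T / N := by
      apply Finset.sum_lt_sum_of_nonempty
      · simpa [Finset.univ_nonempty_iff] using Fin.pos_iff_nonempty.mp hN
      · exact fun μ _ => hc μ
    rw [key] at this
    simp [Finset.sum_const, nsmul_eq_mul] at this
    rw [mul_div_cancel₀] at this
    · exact lt_irrefl T this
    · exact_mod_cast hN.ne'
  obtain ⟨μ, hμ⟩ := hex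
  have hle : lam μ ≤ -(T / (2 * N)) := by
    rcases abs_cases (lam μ) with ⟨h1, _⟩ | ⟨h1, _⟩
    · -- |lam μ| = lam μ, so T/N ≤ 0, so T ≤ 0, T = 0
      rw [h1, sub_self] at hμ
      have hTN : T / N ≤ 0 := hμ
      have : T ≤ 0 := by
        by_contra hT
        push_neg at hT
        have : 0 < T / N := div_pos hT (by exact_mod_cast hN)
        linarith
      have hT0' : T = 0 := le_antisymm this hT0
      rw [hT0']
      have h2 : |lam μ| ≤ T := by
        rw [hT]
        exact Finset.single_le_sum (fun i _ => abs_nonneg (lam i)) (Finset.mem_univ μ)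
      rw [hT0'] at h2
      have := abs_nonneg (lam μ)
      have habs : |lam μ| = 0 := le_antisymm h2 this
      rw [abs_eq_zero] at habs
      rw [habs]
      simp
    · rw [h1] at hμ
      have : T / N ≤ -2 * lam μ := by linarith
      have hN' : (0:ℝ) < N := by exact_mod_cast hN
      rw [div_le_iff₀ hN'] at this
      rw [le_neg, div_le_iff₀ (by positivity : (0:ℝ) < 2 * N)]
      linarith
  calc f J lam ≤ lam μ := f_le_diag J hsym hdiag hN lam μ
    _ ≤ -(T / (2 * N)) := hle
    _ = -T / (2 * N) := by rw [neg_div]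

end F
lemma exists_maximizer (J : Matrix (Fin N) (Fin N) ℝ) (hsym : J.IsSymm)
    (hdiag : ∀ i, J i i = 0) (hN : 0 < N) :
    ∃ lamh : Fin N → ℝ, (∑ μ, lamh μ = 0) ∧
      ∀ lam : Fin N → ℝ, (∑ μ, lam μ = 0) → f J lam ≤ f J lamh := by
  have hN' : (0:ℝ) < N := by exact_mod_cast hN
  have hf0 : f J 0 ≤ 0 := by
    have := f_le_neg_sum_abs J hsym hdiag hN 0 (by simp)
    simpa using this
  set R : ℝ := 2 * N * (-(f J 0)) + 1 with hR
  have hRpos : 0 < R := by nlinarith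
  set K : Set (Fin N → ℝ) := {lam | (∑ μ, lam μ = 0) ∧ ∑ μ, |lam μ| ≤ R} with hK
  have hKne : (0 : Fin N → ℝ) ∈ K := by
    constructor <;> simp [hRpos.le]
  have hsumcont : Continuous fun lam : Fin N → ℝ => ∑ μ, lam μ :=
    continuous_finset_sum _ fun μ _ => continuous_apply μ
  have habscont : Continuous fun lam : Fin N → ℝ => ∑ μ, |lam μ| :=
    continuous_finset_sum _ fun μ _ => (continuous_apply μ).abs
  have hKclosed : IsClosed K := by
    have h1 : IsClosed {lam : Fin N → ℝ | ∑ μ, lam μ = 0} :=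
      isClosed_eq hsumcont continuous_const
    have h2 : IsClosed {lam : Fin N → ℝ | ∑ μ, |lam μ| ≤ R} :=
      isClosed_le habscont continuous_const
    exact h1.inter h2
  have hKsub : K ⊆ Metric.closedBall 0 R := by
    rintro lam ⟨-, h2⟩
    rw [Metric.mem_closedBall, dist_zero_right]
    rw [pi_norm_le_iff_of_nonneg hRpos.le]
    intro μ
    calc ‖lam μ‖ = |lam μ| := Real.norm_eq_abs _
      _ ≤ ∑ ν, |lam ν| := Finset.single_le_sum (fun i _ => abs_nonneg (lam i)) (Finset.mem_univ μ)
      _ ≤ R := h2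
  have hKcompact : IsCompact K :=
    (isCompact_closedBall (0 : Fin N → ℝ) R).of_isClosed_subset hKclosed hKsub
  obtain ⟨lamh, hmem, hmax⟩ :=
    hKcompact.exists_isMaxOn ⟨0, hKne⟩ ((f_continuous J hsym hN).continuousOn)
  refine ⟨lamh, hmem.1, fun lam hlam => ?_⟩
  by_cases h : lam ∈ K
  · exact hmax h
  · have hout : R < ∑ μ, |lam μ| := by
      by_contra hc
      push_neg at hc
      exact h ⟨hlam, hc⟩
    have hb := f_le_neg_sum_abs J hsym hdiag hN lam hlam
    have hq : (0:ℝ) < 2*N := by positivity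
    have h2 : (-(∑ μ, |lam μ|)) / (2 * N) < f J 0 := by
      rw [div_lt_iff₀ hq]
      nlinarith [hout]
    exact le_trans (hb.trans_lt h2).le (hmax hKne)

lemma isCompact_convexHull_pi {C : Set (Fin N → ℝ)} (hC : IsCompact C) (hne : C.Nonempty) :
    IsCompact (convexHull ℝ C) := by
  classical
  obtain ⟨c0, hc0⟩ := hne
  set n := N + 1 with hn
  set g : (Fin n → ℝ) × (Fin n → (Fin N → ℝ)) → (Fin N → ℝ) :=
    fun wz => ∑ k, wz.1 k • wz.2 k with hg
  set D : Set ((Fin n → ℝ) × (Fin n → (Fin N → ℝ))) :=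
      (stdSimplex ℝ (Fin n)) ×ˢ (Set.univ.pi fun _ => C) with hD
  have hDcomp : IsCompact D := IsCompact.prod (isCompact_stdSimplex ℝ (Fin n)) (isCompact_univ_pi fun _ => hC)
  have hgcont : Continuous g := by
    apply continuous_finset_sum
    intro k _
    exact ((continuous_apply k).comp continuous_fst).smul
      ((continuous_apply k).comp continuous_snd)
  have himg : convexHull ℝ C = g '' D := by
    apply Set.Subset.antisymm
    · intro x hx
      obtain ⟨ι, hfin, z, w, hzC, hindep, hwpos, hwsum, hsum⟩ :=
        eq_pos_convex_span_of_mem_convexHull hx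
      have hcard : Fintype.card ι ≤ n := by
        have h1 := hindep.card_le_finrank_succ
        have h2 : Module.finrank ℝ (vectorSpan ℝ (Set.range z)) ≤ Module.finrank ℝ (Fin N → ℝ) :=
          Submodule.finrank_le _
        rw [Module.finrank_pi, Fintype.card_fin] at h2
        omega
      obtain ⟨e⟩ : Nonempty (ι ↪ Fin n) := by
        apply Function.Embedding.nonempty_of_card_le
        simpa [Fintype.card_fin] using hcard
      set w' : Fin n → ℝ := fun k => ∑ i, if e i = k then w i else 0 with hw'
      set z' : Fin n → (Fin N → ℝ) := fun k => if h : ∃ i, e i = k then z h.choose else c0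
        with hz'
      have hz'ei : ∀ i, z' (e i) = z i := by
        intro i
        have h : ∃ i', e i' = e i := ⟨i, rfl⟩
        have := h.choose_spec
        have hic : h.choose = i := e.injective this
        simp only [hz', dif_pos h, hic]
      have hz'C : ∀ k, z' k ∈ C := by
        intro k
        by_cases h : ∃ i, e i = k
        · simp only [hz', dif_pos h]
          exact hzC ⟨h.choose, rfl⟩
        · simp only [hz', dif_neg h]
          exact hc0
      have hw'sum : ∑ k, w' k = 1 := by
        rw [← hwsum]
        simp only [hw']
        rw [Finset.sum_comm]
        refine Finset.sum_congr rfl fun i _ => ?_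
        simp [Finset.sum_ite_eq]
      have hw'pos : ∀ k, 0 ≤ w' k := by
        intro k
        refine Finset.sum_nonneg fun i _ => ?_
        by_cases h : e i = k <;> simp [h, (hwpos i).le]
      have hsum' : ∑ k, w' k • z' k = x := by
        rw [← hsum]
        simp only [hw', Finset.sum_smul]
        rw [Finset.sum_comm]
        refine Finset.sum_congr rfl fun i _ => ?_
        have : ∀ k, (if e i = k then w i else 0) • z' k
            = if e i = k then w i • z' k else 0 := by
          intro k; by_cases h : e i = k <;> simp [h]
        simp only [this]
        rw [Finset.sum_ite_eq]
        simp [hz'ei i]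
      refine ⟨(w', z'), ⟨⟨fun k => hw'pos k, hw'sum⟩, fun k _ => hz'C k⟩, hsum'⟩
    · rintro x ⟨⟨w, z⟩, ⟨hw, hz⟩, rfl⟩
      exact mem_convexHull_of_exists_fintype w z hw.1 hw.2 (fun k => hz k (Set.mem_univ k)) rfl
  rw [himg]
  exact hDcomp.image hgcont

section Main
variable (J : Matrix (Fin N) (Fin N) ℝ)

lemma cont_dotself : Continuous fun x : Fin N → ℝ => x ⬝ᵥ x :=
  continuous_finset_sum _ fun μ _ => (continuous_apply μ).mul (continuous_apply μ)

lemma cont_quad (A : Matrix (Fin N) (Fin N) ℝ) : Continuous fun x : Fin N → ℝ => x ⬝ᵥ A *ᵥ x := by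
  have : (fun x : Fin N → ℝ => x ⬝ᵥ A *ᵥ x)
      = fun x => ∑ μ, x μ * (∑ ν, A μ ν * x ν) := rfl
  rw [this]
  exact continuous_finset_sum _ fun μ _ => (continuous_apply μ).mul
    (continuous_finset_sum _ fun ν _ => continuous_const.mul (continuous_apply ν))

lemma cont_wsum (δ : Fin N → ℝ) : Continuous fun x : Fin N → ℝ => ∑ μ, δ μ * (x μ)^2 :=
  continuous_finset_sum _ fun μ _ => continuous_const.mul ((continuous_apply μ).pow 2)

lemma isCompact_sphere' : IsCompact {x : Fin N → ℝ | x ⬝ᵥ x = 1} := by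
  have hclosed : IsClosed {x : Fin N → ℝ | x ⬝ᵥ x = 1} :=
    isClosed_eq cont_dotself continuous_const
  have hsub : {x : Fin N → ℝ | x ⬝ᵥ x = 1} ⊆ Metric.closedBall 0 1 := by
    intro x hx
    rw [Metric.mem_closedBall, dist_zero_right, pi_norm_le_iff_of_nonneg (by norm_num : (0:ℝ) ≤ 1)]
    intro μ
    have := sq_le_one_of_unit x hx μ
    rw [Real.norm_eq_abs]
    nlinarith [abs_nonneg (x μ), sq_abs (x μ)]
  exact (isCompact_closedBall (0 : Fin N → ℝ) 1).of_isClosed_subset hclosed hsub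

/-- The key duality lemma: at a maximizer, the uniform vector is in the convex hull of squared
unit minimal eigenvectors. -/
lemma exists_good_config (hsym : J.IsSymm) (hdiag : ∀ i, J i i = 0) (hN : 0 < N)
    (lamh : Fin N → ℝ) (hsum0 : ∑ μ, lamh μ = 0)
    (hmax : ∀ lam : Fin N → ℝ, (∑ μ, lam μ = 0) → f J lam ≤ f J lamh) :
    ∃ (K : ℕ) (c : Fin K → ℝ) (xx : Fin K → (Fin N → ℝ)),
      (∀ k, 0 ≤ c k) ∧ (∀ k, xx k ⬝ᵥ xx k = 1) ∧
      (∀ k, (J + Matrix.diagonal lamh) *ᵥ xx k = f J lamh • xx k) ∧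
      (∀ μ, ∑ k, c k * (xx k μ)^2 = 1 / N) := by
  classical
  set A : Matrix (Fin N) (Fin N) ℝ := J + Matrix.diagonal lamh with hAdef
  have hA : A.IsHermitian := hermA J hsym lamh
  set m : ℝ := f J lamh with hm
  have hmeig : m = minEigenvalue A := rfl
  set S0 : Set (Fin N → ℝ) := {x | x ⬝ᵥ x = 1 ∧ A *ᵥ x = m • x} with hS0
  set sq : (Fin N → ℝ) → (Fin N → ℝ) := fun x μ => (x μ)^2 with hsq
  set C : Set (Fin N → ℝ) := sq '' S0 with hC
  set u : Fin N → ℝ := fun _ => 1 / N with hu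
  -- S0 compact
  have hS0closed : IsClosed S0 := by
    refine IsClosed.inter (isClosed_eq cont_dotself continuous_const) ?_
    have hc1 : Continuous fun x : Fin N → ℝ => A *ᵥ x := by
      have : (fun x : Fin N → ℝ => A *ᵥ x) = fun x μ => ∑ ν, A μ ν * x ν := rfl
      rw [this]
      exact continuous_pi fun μ =>
        continuous_finset_sum _ fun ν _ => continuous_const.mul (continuous_apply ν)
    exact isClosed_eq hc1 (continuous_id.const_smul m)
  have hS0compact : IsCompact S0 :=
    isCompact_sphere'.of_isClosed_subset hS0closed fun x hx => hx.1
  have hS0ne : S0.Nonempty := by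
    obtain ⟨x, hx1, hx2⟩ := exists_unit_minEigvec A hA hN
    exact ⟨x, hx1, hx2⟩
  have hCcompact : IsCompact C := hS0compact.image (continuous_pi fun μ => (continuous_apply μ).pow 2)
  have hCne : C.Nonempty := hS0ne.image _
  have hCsum1 : ∀ p ∈ C, ∑ μ, p μ = 1 := by
    rintro p ⟨x, ⟨hx1, _⟩, rfl⟩
    rw [← hx1, dotProduct]
    exact Finset.sum_congr rfl fun μ _ => by simp [hsq, pow_two]
  -- main claim
  have hmain : u ∈ convexHull ℝ C := by
    by_contra hu'
    have hconv : Convex ℝ (convexHull ℝ C) := convex_convexHull ℝ C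
    have hclosed : IsClosed (convexHull ℝ C) := (isCompact_convexHull_pi hCcompact hCne).isClosed
    obtain ⟨φ, c0, hφlt, hc0⟩ := geometric_hahn_banach_closed_point hconv hclosed hu'
    set g : Fin N → ℝ := fun μ => φ (Pi.single μ 1) with hg
    have hφeq : ∀ p : Fin N → ℝ, φ p = ∑ μ, p μ * g μ := by
      intro p
      have hrepr : p = ∑ μ, p μ • (Pi.single μ 1 : Fin N → ℝ) := by
        have h0 := pi_eq_sum_univ p
        convert h0 using 2 with μ
        funext j
        simp [Pi.single_apply, eq_comm]
      conv_lhs => rw [hrepr]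
      rw [map_sum]
      refine Finset.sum_congr rfl fun μ _ => ?_
      rw [_root_.map_smul, smul_eq_mul]
    set δ : Fin N → ℝ := fun μ => (∑ ν, g ν) / N - g μ with hδ
    have hδsum : ∑ μ, δ μ = 0 := by
      rw [hδ]
      rw [Finset.sum_sub_distrib, Finset.sum_const, Finset.card_univ, Fintype.card_fin,
        nsmul_eq_mul]
      rw [mul_div_cancel₀]
      · ring
      · exact_mod_cast hN.ne'
    have hφu : φ u = (∑ ν, g ν) / N := by
      rw [hφeq u]
      rw [hu, Finset.sum_div]
      exact Finset.sum_congr rfl fun μ _ => by ring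
    have hsep : ∀ p ∈ C, 0 < ∑ μ, δ μ * p μ := by
      intro p hp
      have h1 : ∑ μ, δ μ * p μ = (∑ ν, g ν) / N * (∑ μ, p μ) - φ p := by
        rw [hφeq p, hδ, Finset.mul_sum, ← Finset.sum_sub_distrib]
        exact Finset.sum_congr rfl fun μ _ => by ring
      rw [h1, hCsum1 p hp, mul_one, ← hφu]
      have := hφlt p (subset_convexHull ℝ C hp)
      linarith
    -- contradiction with maximality
    set t : ℕ → ℝ := fun n => 1 / (n + 1) with ht
    have htpos : ∀ n, 0 < t n := fun n => by positivity
    have hxn : ∀ n : ℕ, ∃ x : Fin N → ℝ, x ⬝ᵥ x = 1 ∧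
        (J + Matrix.diagonal (lamh + t n • δ)) *ᵥ x = f J (lamh + t n • δ) • x := fun n =>
      exists_unit_minEigvec _ (hermA J hsym _) hN
    choose xs hxs1 hxs2 using hxn
    have hfn : ∀ n, f J (lamh + t n • δ) ≤ m := by
      intro n
      apply hmax
      simp only [Pi.add_apply, Pi.smul_apply, smul_eq_mul]
      rw [Finset.sum_add_distrib, hsum0, ← Finset.mul_sum, hδsum, mul_zero, add_zero]
    have hquadn : ∀ n, xs n ⬝ᵥ A *ᵥ xs n + t n * (∑ μ, δ μ * (xs n μ)^2) ≤ m := by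
      intro n
      have h1 : xs n ⬝ᵥ (J + Matrix.diagonal (lamh + t n • δ)) *ᵥ xs n
          = f J (lamh + t n • δ) := quad_of_eigvec _ _ (hxs1 n) _ (hxs2 n)
      have h2 := quadA J (lamh + t n • δ) (xs n)
      have h3 := quadA J lamh (xs n)
      have h4 : ∑ μ, (lamh + t n • δ) μ * (xs n μ)^2
          = ∑ μ, lamh μ * (xs n μ)^2 + t n * ∑ μ, δ μ * (xs n μ)^2 := by
        rw [Finset.mul_sum, ← Finset.sum_add_distrib]
        exact Finset.sum_congr rfl fun μ _ => by simp [Pi.smul_apply, smul_eq_mul]; ring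
      have h5 := hfn n
      rw [h2, h4] at h1
      rw [hAdef, h3]
      linarith
    have hray : ∀ n, m ≤ xs n ⬝ᵥ A *ᵥ xs n := by
      intro n
      have := rayleigh_lb A hA hN (xs n)
      rw [hxs1 n, mul_one] at this
      rw [hmeig]
      exact this
    have hSn : ∀ n, (∑ μ, δ μ * (xs n μ)^2) ≤ 0 := by
      intro n
      have h1 := hquadn n
      have h2 := hray n
      nlinarith [htpos n]
    -- subsequence
    obtain ⟨xb, hxb, ψ, hψ, hψtend⟩ := isCompact_sphere'.tendsto_subseq
      (x := xs) (fun n => hxs1 n)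
    have hxb1 : xb ⬝ᵥ xb = 1 := hxb
    have htend1 : Filter.Tendsto (fun n => (xs (ψ n)) ⬝ᵥ A *ᵥ (xs (ψ n))) Filter.atTop
        (nhds (xb ⬝ᵥ A *ᵥ xb)) := ((cont_quad A).continuousAt.tendsto.comp hψtend)
    have htend2 : Filter.Tendsto (fun n => ∑ μ, δ μ * (xs (ψ n) μ)^2) Filter.atTop
        (nhds (∑ μ, δ μ * (xb μ)^2)) := ((cont_wsum δ).continuousAt.tendsto.comp hψtend)
    have hδbar : (∑ μ, δ μ * (xb μ)^2) ≤ 0 :=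
      le_of_tendsto htend2 (Filter.Eventually.of_forall fun n => hSn (ψ n))
    have httend : Filter.Tendsto (fun n => t (ψ n)) Filter.atTop (nhds 0) := by
      have h1 : Filter.Tendsto t Filter.atTop (nhds 0) := by
        rw [ht]
        exact tendsto_one_div_add_atTop_nhds_zero_nat
      exact h1.comp hψ.tendsto_atTop
    have hqbar : xb ⬝ᵥ A *ᵥ xb ≤ m := by
      have hb : Filter.Tendsto (fun n => m - t (ψ n) * (∑ μ, δ μ * (xs (ψ n) μ)^2))
          Filter.atTop (nhds (m - 0 * (∑ μ, δ μ * (xb μ)^2))) :=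
        Filter.Tendsto.sub tendsto_const_nhds (httend.mul htend2)
      rw [zero_mul, sub_zero] at hb
      refine le_of_tendsto_of_tendsto' htend1 hb fun n => ?_
      have := hquadn (ψ n)
      linarith
    have hqbar2 : m ≤ xb ⬝ᵥ A *ᵥ xb := by
      have := rayleigh_lb A hA hN xb
      rw [hxb1, mul_one] at this
      rw [hmeig]; exact this
    have heig : A *ᵥ xb = m • xb := by
      rw [hmeig]
      apply eigvec_of_rayleigh_eq A hA hN
      rw [hxb1, mul_one, ← hmeig]
      linarith
    have hpC : sq xb ∈ C := ⟨xb, ⟨hxb1, heig⟩, rfl⟩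
    have := hsep (sq xb) hpC
    simp only [hsq] at this
    linarith
  -- extraction
  rw [mem_convexHull_iff_exists_fintype] at hmain
  obtain ⟨ι, hfin, w, z, hw0, hw1, hzC, hsum⟩ := hmain
  set K := Fintype.card ι with hK
  set e : ι ≃ Fin K := Fintype.equivFin ι with he
  choose xw hxw using fun i => hzC i
  refine ⟨K, fun k => w (e.symm k), fun k => xw (e.symm k), ?_, ?_, ?_, ?_⟩
  · exact fun k => hw0 _
  · exact fun k => (hxw (e.symm k)).1.1
  · exact fun k => (hxw (e.symm k)).1.2
  · intro μ
    have h1 : ∀ i, (xw i μ)^2 = z i μ := fun i => congrFun (hxw i).2 μ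
    have h2 : (∑ i, w i • z i) μ = u μ := by rw [hsum]
    rw [Finset.sum_apply] at h2
    have h3 : ∑ k, w (e.symm k) * (xw (e.symm k) μ)^2 = ∑ i, w i * (xw i μ)^2 :=
      Equiv.sum_comp e.symm (fun i => w i * (xw i μ)^2)
    rw [h3]
    calc ∑ i, w i * (xw i μ)^2 = ∑ i, w i * z i μ := by
          refine Finset.sum_congr rfl fun i _ => ?_
          rw [h1 i]
      _ = u μ := by
          rw [← h2]
          exact Finset.sum_congr rfl fun i _ => by simp [smul_eq_mul]
      _ = 1 / N := rfl

end Main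

/-- energy as a sum of column quadratic forms -/
lemma energy_eq {M : ℕ} (J : Matrix (Fin N) (Fin N) ℝ) (s : Matrix (Fin N) (Fin M) ℝ) :
    (J * (s * sᵀ)).trace = ∑ i : Fin M, (fun μ => s μ i) ⬝ᵥ J *ᵥ (fun μ => s μ i) := by
  have lhs : (J * (s * sᵀ)).trace = ∑ μ, ∑ ν, ∑ i, J μ ν * (s ν i * s μ i) := by
    simp only [Matrix.trace, Matrix.diag, Matrix.mul_apply, Matrix.transpose_apply,
      Finset.mul_sum]
  have rhs : ∑ i : Fin M, (fun μ => s μ i) ⬝ᵥ J *ᵥ (fun μ => s μ i)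
      = ∑ i, ∑ μ, ∑ ν, s μ i * (J μ ν * s ν i) := by
    simp only [dotProduct, mulVec, Finset.mul_sum]
  rw [lhs, rhs]
  calc ∑ μ, ∑ ν, ∑ i, J μ ν * (s ν i * s μ i)
      = ∑ μ, ∑ i, ∑ ν, J μ ν * (s ν i * s μ i) :=
        Finset.sum_congr rfl (fun μ _ => Finset.sum_comm)
    _ = ∑ i, ∑ μ, ∑ ν, J μ ν * (s ν i * s μ i) := Finset.sum_comm
    _ = ∑ i, ∑ μ, ∑ ν, s μ i * (J μ ν * s ν i) := by
        refine Finset.sum_congr rfl fun i _ => Finset.sum_congr rfl fun μ _ =>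
          Finset.sum_congr rfl fun ν _ => by ring

/-- total squared norm of columns of a spin config -/
lemma col_norm_sum {M : ℕ} (s : Matrix (Fin N) (Fin M) ℝ) (hs : IsSpinConfig s) :
    ∑ i : Fin M, (fun μ => s μ i) ⬝ᵥ (fun μ => s μ i) = (N : ℝ) := by
  simp only [dotProduct]
  rw [Finset.sum_comm]
  have h1 : ∀ μ ∈ Finset.univ, ∑ i : Fin M, s μ i * s μ i = 1 := fun μ _ => hs μ
  rw [Finset.sum_congr rfl h1]
  simp

lemma sum_col_sq {M : ℕ} (s : Matrix (Fin N) (Fin M) ℝ) (hs : IsSpinConfig s) (g : Fin N → ℝ) :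
    ∑ μ, g μ * (∑ i : Fin M, (s μ i)^2) = ∑ μ, g μ := by
  refine Finset.sum_congr rfl fun μ _ => ?_
  have h := hs μ
  have h2 : ∑ i : Fin M, (s μ i)^2 = 1 := by
    rw [← h]; exact Finset.sum_congr rfl fun i _ => (sq (s μ i))
  rw [h2, mul_one]

section Glue
variable (J : Matrix (Fin N) (Fin N) ℝ)

/-- energy identity: for a spin config, the `J`-energy equals the `J(λ)`-energy -/
lemma energy_shift {M : ℕ} (lamh : Fin N → ℝ) (hsum0 : ∑ μ, lamh μ = 0)
    (t : Matrix (Fin N) (Fin M) ℝ) (ht : IsSpinConfig t) :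
    ∑ i : Fin M, (fun μ => t μ i) ⬝ᵥ (J + Matrix.diagonal lamh) *ᵥ (fun μ => t μ i)
      = (J * (t * tᵀ)).trace := by
  rw [energy_eq J t]
  have h1 : ∀ i : Fin M, (fun μ => t μ i) ⬝ᵥ (J + Matrix.diagonal lamh) *ᵥ (fun μ => t μ i)
      = (fun μ => t μ i) ⬝ᵥ J *ᵥ (fun μ => t μ i) + ∑ μ, lamh μ * (t μ i)^2 :=
    fun i => quadA J lamh _
  calc ∑ i : Fin M, (fun μ => t μ i) ⬝ᵥ (J + Matrix.diagonal lamh) *ᵥ (fun μ => t μ i)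
      = ∑ i : Fin M, ((fun μ => t μ i) ⬝ᵥ J *ᵥ (fun μ => t μ i) + ∑ μ, lamh μ * (t μ i)^2) :=
        Finset.sum_congr rfl fun i _ => h1 i
    _ = (∑ i : Fin M, (fun μ => t μ i) ⬝ᵥ J *ᵥ (fun μ => t μ i))
        + ∑ i : Fin M, ∑ μ, lamh μ * (t μ i)^2 := Finset.sum_add_distrib
    _ = ∑ i : Fin M, (fun μ => t μ i) ⬝ᵥ J *ᵥ (fun μ => t μ i) := by
        have h2 : ∑ i : Fin M, ∑ μ, lamh μ * (t μ i)^2 = ∑ μ, lamh μ * ∑ i : Fin M, (t μ i)^2 := by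
          rw [Finset.sum_comm]
          exact Finset.sum_congr rfl fun μ _ => by rw [Finset.mul_sum]
        rw [h2, sum_col_sq t ht lamh, hsum0, add_zero]

/-- every spin configuration has energy at least `N * f J lamh` -/
lemma energy_lb {M : ℕ} (hsym : J.IsSymm) (hN : 0 < N) (lamh : Fin N → ℝ)
    (hsum0 : ∑ μ, lamh μ = 0) (t : Matrix (Fin N) (Fin M) ℝ) (ht : IsSpinConfig t) :
    (N : ℝ) * f J lamh ≤ (J * (t * tᵀ)).trace := by
  rw [← energy_shift J lamh hsum0 t ht]
  have h1 : ∀ i : Fin M, f J lamh * ((fun μ => t μ i) ⬝ᵥ (fun μ => t μ i))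
      ≤ (fun μ => t μ i) ⬝ᵥ (J + Matrix.diagonal lamh) *ᵥ (fun μ => t μ i) :=
    fun i => rayleigh_lb _ (hermA J hsym lamh) hN _
  calc (N : ℝ) * f J lamh = f J lamh * (N : ℝ) := mul_comm _ _
    _ = f J lamh * ∑ i : Fin M, (fun μ => t μ i) ⬝ᵥ (fun μ => t μ i) := by
        rw [col_norm_sum t ht]
    _ = ∑ i : Fin M, f J lamh * ((fun μ => t μ i) ⬝ᵥ (fun μ => t μ i)) := Finset.mul_sum _ _ _
    _ ≤ _ := Finset.sum_le_sum fun i _ => h1 i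

/-- construction of an optimal spin configuration from the duality lemma -/
lemma exists_opt_config (hsym : J.IsSymm) (hdiag : ∀ i, J i i = 0) (hN : 0 < N)
    (lamh : Fin N → ℝ) (hsum0 : ∑ μ, lamh μ = 0)
    (hmax : ∀ lam : Fin N → ℝ, (∑ μ, lam μ = 0) → f J lam ≤ f J lamh) :
    ∃ (K : ℕ) (sstar : Matrix (Fin N) (Fin K) ℝ), IsSpinConfig sstar ∧
      (J * (sstar * sstarᵀ)).trace = (N : ℝ) * f J lamh := by
  obtain ⟨K, c, xx, hc0, hxx1, hxxeig, hcov⟩ :=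
    exists_good_config J hsym hdiag hN lamh hsum0 hmax
  set m : ℝ := f J lamh with hm
  set a : Fin K → ℝ := fun k => Real.sqrt ((N : ℝ) * c k) with ha
  have ha2 : ∀ k, a k ^ 2 = (N : ℝ) * c k := by
    intro k
    rw [ha]
    exact Real.sq_sqrt (mul_nonneg (Nat.cast_nonneg N) (hc0 k))
  set sstar : Matrix (Fin N) (Fin K) ℝ := Matrix.of fun μ k => a k * xx k μ with hsstar
  have hspin : IsSpinConfig sstar := by
    intro μ
    have h1 : ∀ k, sstar μ k * sstar μ k = (N : ℝ) * (c k * (xx k μ)^2) := by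
      intro k
      have := ha2 k
      simp only [hsstar, Matrix.of_apply]
      nlinarith [ha2 k]
    rw [Finset.sum_congr rfl fun k _ => h1 k, ← Finset.mul_sum]
    rw [hcov μ, mul_one_div]
    exact div_self (by exact_mod_cast hN.ne')
  refine ⟨K, sstar, hspin, ?_⟩
  rw [energy_eq J sstar]
  have hcol : ∀ k, (fun μ => sstar μ k) ⬝ᵥ J *ᵥ (fun μ => sstar μ k)
      = (N : ℝ) * c k * ((xx k) ⬝ᵥ J *ᵥ (xx k)) := by
    intro k
    have : (fun μ => sstar μ k) = a k • xx k := by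
      funext μ
      simp [hsstar, Pi.smul_apply, smul_eq_mul]
    rw [this, smul_dotProduct, mulVec_smul, dotProduct_smul, smul_eq_mul, smul_eq_mul, ← mul_assoc,
      ← pow_two, ha2 k]
  have hquadxx : ∀ k, (xx k) ⬝ᵥ J *ᵥ (xx k) = m - ∑ μ, lamh μ * (xx k μ)^2 := by
    intro k
    have h1 : (xx k) ⬝ᵥ (J + Matrix.diagonal lamh) *ᵥ (xx k) = m :=
      quad_of_eigvec _ _ (hxx1 k) _ (hxxeig k)
    have h2 := quadA J lamh (xx k)
    rw [h2] at h1
    linarith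
  have hsumc : ∑ k, c k = 1 := by
    have h1 : ∀ k, c k = ∑ μ, c k * (xx k μ)^2 := by
      intro k
      rw [← Finset.mul_sum]
      have h2 : ∑ μ, (xx k μ)^2 = 1 := by
        rw [← hxx1 k, dotProduct]
        exact Finset.sum_congr rfl fun μ _ => (sq (xx k μ))
      rw [h2, mul_one]
    rw [Finset.sum_congr rfl fun k _ => h1 k, Finset.sum_comm]
    rw [Finset.sum_congr rfl fun μ (_ : μ ∈ Finset.univ) => hcov μ]
    rw [Finset.sum_const, Finset.card_univ, Fintype.card_fin, nsmul_eq_mul]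
    field_simp
  have hcross : ∑ k, c k * ∑ μ, lamh μ * (xx k μ)^2 = 0 := by
    have h1 : ∀ k, c k * ∑ μ, lamh μ * (xx k μ)^2 = ∑ μ, lamh μ * (c k * (xx k μ)^2) := by
      intro k
      rw [Finset.mul_sum]
      exact Finset.sum_congr rfl fun μ _ => by ring
    rw [Finset.sum_congr rfl fun k _ => h1 k, Finset.sum_comm]
    have h2 : ∀ μ, ∑ k, lamh μ * (c k * (xx k μ)^2) = lamh μ / N := by
      intro μ
      rw [← Finset.mul_sum, hcov μ]
      ring
    rw [Finset.sum_congr rfl fun μ (_ : μ ∈ Finset.univ) => h2 μ, ← Finset.sum_div, hsum0,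
      zero_div]
  calc ∑ k, (fun μ => sstar μ k) ⬝ᵥ J *ᵥ (fun μ => sstar μ k)
      = ∑ k, (N : ℝ) * c k * (m - ∑ μ, lamh μ * (xx k μ)^2) := by
        refine Finset.sum_congr rfl fun k _ => ?_
        rw [hcol k, hquadxx k]
    _ = (N : ℝ) * m * (∑ k, c k) - (N : ℝ) * ∑ k, c k * ∑ μ, lamh μ * (xx k μ)^2 := by
        rw [Finset.mul_sum, Finset.mul_sum, ← Finset.sum_sub_distrib]
        exact Finset.sum_congr rfl fun k _ => by ring
    _ = (N : ℝ) * m := by rw [hsumc, hcross, mul_one, mul_zero, sub_zero]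

/-- any ground state lives columnwise in the minimal eigenspace of a maximizer -/
lemma groundstate_eigvec (hsym : J.IsSymm) (hdiag : ∀ i, J i i = 0) (hN : 0 < N)
    (lamh : Fin N → ℝ) (hsum0 : ∑ μ, lamh μ = 0)
    (hmax : ∀ lam : Fin N → ℝ, (∑ μ, lam μ = 0) → f J lam ≤ f J lamh)
    {M : ℕ} (s : Matrix (Fin N) (Fin M) ℝ) (hs : IsGroundState J s) :
    ∀ i : Fin M, (J + Matrix.diagonal lamh) *ᵥ (fun μ => s μ i) = f J lamh • (fun μ => s μ i) := by
  obtain ⟨K, sstar, hspin, htr⟩ := exists_opt_config J hsym hdiag hN lamh hsum0 hmax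
  have hub : (J * (s * sᵀ)).trace ≤ (N : ℝ) * f J lamh := by
    rw [← htr]
    exact hs.2 K sstar hspin
  set m : ℝ := f J lamh with hm
  set q : Fin M → ℝ := fun i => (fun μ => s μ i) ⬝ᵥ (J + Matrix.diagonal lamh) *ᵥ (fun μ => s μ i)
    with hq
  set nn : Fin M → ℝ := fun i => (fun μ => s μ i) ⬝ᵥ (fun μ => s μ i) with hnn
  have hsq : ∑ i, q i = (J * (s * sᵀ)).trace := energy_shift J lamh hsum0 s hs.1
  have hsn : ∑ i, nn i = (N : ℝ) := col_norm_sum s hs.1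
  have hqi : ∀ i, m * nn i ≤ q i := fun i => rayleigh_lb _ (hermA J hsym lamh) hN _
  have hzero : ∀ i ∈ Finset.univ, q i - m * nn i = 0 := by
    rw [← Finset.sum_eq_zero_iff_of_nonneg (fun i _ => by linarith [hqi i])]
    have hge : m * (N:ℝ) ≤ (J * (s * sᵀ)).trace := by
      rw [← hsq, ← hsn, Finset.mul_sum]
      exact Finset.sum_le_sum fun i _ => hqi i
    rw [Finset.sum_sub_distrib, hsq, ← Finset.mul_sum, hsn]
    have hle : (J * (s * sᵀ)).trace ≤ m * N := by rw [mul_comm]; exact hub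
    linarith
  intro i
  apply eigvec_of_rayleigh_eq _ (hermA J hsym lamh) hN
  have := hzero i (Finset.mem_univ i)
  have h2 : q i = m * nn i := by linarith
  exact h2

end Glue

end SpinProofAux

/-- There is a unique `λ̂` with `∑ λ̂ = 0` maximizing `λ ↦ j_min(J + diag λ)`, and every
ground state of the Heisenberg Hamiltonian of `J` lives on the eigenspace of `J(λ̂)`
corresponding to the minimal eigenvalue `j_min(λ̂)`. -/
theorem existsUnique_maximizer_and_groundStates_on_min_eigenspace {N : ℕ} (hN : 0 < N)
    (J : Matrix (Fin N) (Fin N) ℝ) (hsym : J.IsSymm) (hdiag : ∀ i, J i i = 0) :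
    (∃! lamh : Fin N → ℝ, (∑ i, lamh i = 0) ∧
        ∀ lam : Fin N → ℝ, (∑ i, lam i = 0) →
          minEigenvalue (J + Matrix.diagonal lam) ≤ minEigenvalue (J + Matrix.diagonal lamh)) ∧
    (∀ lamh : Fin N → ℝ, ((∑ i, lamh i = 0) ∧
        ∀ lam : Fin N → ℝ, (∑ i, lam i = 0) →
          minEigenvalue (J + Matrix.diagonal lam) ≤ minEigenvalue (J + Matrix.diagonal lamh)) →
      ∀ (M : ℕ) (s : Matrix (Fin N) (Fin M) ℝ), IsGroundState J s →
        ∀ i : Fin M, (J + Matrix.diagonal lamh).mulVec (fun μ => s μ i) =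
          minEigenvalue (J + Matrix.diagonal lamh) • (fun μ => s μ i)) := by
  classical
  obtain ⟨lam0, hlam0sum, hlam0max⟩ := SpinProofAux.exists_maximizer J hsym hdiag hN
  have part2 : ∀ lamh : Fin N → ℝ, ((∑ i, lamh i = 0) ∧
        ∀ lam : Fin N → ℝ, (∑ i, lam i = 0) →
          minEigenvalue (J + Matrix.diagonal lam) ≤ minEigenvalue (J + Matrix.diagonal lamh)) →
      ∀ (M : ℕ) (s : Matrix (Fin N) (Fin M) ℝ), IsGroundState J s →
        ∀ i : Fin M, (J + Matrix.diagonal lamh).mulVec (fun μ => s μ i) =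
          minEigenvalue (J + Matrix.diagonal lamh) • (fun μ => s μ i) := by
    rintro lamh ⟨hsum, hmax⟩ M s hs i
    exact SpinProofAux.groundstate_eigvec J hsym hdiag hN lamh hsum hmax s hs i
  obtain ⟨K, sstar, hspin, htr⟩ :=
    SpinProofAux.exists_opt_config J hsym hdiag hN lam0 hlam0sum hlam0max
  have hgs : IsGroundState J sstar := by
    refine ⟨hspin, fun M' t ht => ?_⟩
    rw [ge_iff_le, htr]
    exact SpinProofAux.energy_lb J hsym hN lam0 hlam0sum t ht
  refine ⟨⟨lam0, ⟨hlam0sum, fun lam h => hlam0max lam h⟩, ?_⟩, part2⟩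
  rintro lam1 ⟨hsum1, hmax1⟩
  have hmm : minEigenvalue (J + Matrix.diagonal lam1) = minEigenvalue (J + Matrix.diagonal lam0) :=
    le_antisymm (hlam0max lam1 hsum1) (hmax1 lam0 hlam0sum)
  have h1 := part2 lam1 ⟨hsum1, hmax1⟩ K sstar hgs
  have h0 := part2 lam0 ⟨hlam0sum, fun lam h => hlam0max lam h⟩ K sstar hgs
  funext μ
  have hrow := hspin μ
  have hex : ∃ k, sstar μ k ≠ 0 := by
    by_contra hc
    push_neg at hc
    rw [Finset.sum_congr rfl (fun k _ => by rw [hc k, mul_zero])] at hrow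
    simp at hrow
  obtain ⟨k, hk⟩ := hex
  have e1 := congrFun (h1 k) μ
  have e0 := congrFun (h0 k) μ
  simp only [Matrix.add_mulVec, Pi.add_apply, Matrix.mulVec_diagonal, Pi.smul_apply,
    smul_eq_mul] at e1 e0
  rw [hmm] at e1
  have : lam1 μ * sstar μ k = lam0 μ * sstar μ k := by linarith
  exact mul_right_cancel₀ hk this
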